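/- Effective R-linear Chow motives lie in the heart of the Chow weight structure: for every smooth projective variety X over a perfect field k and every commutative ring R, the motive M_R(X) belongs to DM^{eff}_{R, w_{Chow}=0}; consequently the Karoubi closure Chow^{eff}_R of the category of such motives is contained in the heart of w_{Chow}^{eff}. -/

import Mathlib

open CategoryTheory CategoryTheory.Limits CategoryTheory.Pretriangulated

universe v u u'

variable (C : Type u) [Category.{v} C] [HasZeroObject C] [HasShift C ℤ]
  [Preadditive C] [∀ n : ℤ, (shiftFunctor C n).Additive] [Pretriangulated C]

/-- A weight structure on a triangulated category `C`:
a pair of Karoubi-closed classes `le = C_{w≤0}` and `ge = C_{w≥0}` satisfying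
semi-invariance with respect to translations, orthogonality and the existence of
weight decompositions. -/
structure WeightStructure where
  /-- the class `C_{w≤0}` -/
  le : Set C
  /-- the class `C_{w≥0}` -/
  ge : Set C
  /-- `C_{w≤0}` is Karoubi-closed (contains all retracts of its elements) -/
  le_retract : ∀ ⦃M N : C⦄, N ∈ le → ∀ (i : M ⟶ N) (r : N ⟶ M), i ≫ r = 𝟙 M → M ∈ le
  /-- `C_{w≥0}` is Karoubi-closed -/
  ge_retract : ∀ ⦃M N : C⦄, N ∈ ge → ∀ (i : M ⟶ N) (r : N ⟶ M), i ≫ r = 𝟙 M → M ∈ ge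
  /-- `C_{w≤0} ⊆ C_{w≤0}[1]`, i.e. `M ∈ C_{w≤0} → M[-1] ∈ C_{w≤0}` -/
  le_shift : ∀ ⦃M : C⦄, M ∈ le → M⟦(-1 : ℤ)⟧ ∈ le
  /-- `C_{w≥0}[1] ⊆ C_{w≥0}` -/
  ge_shift : ∀ ⦃M : C⦄, M ∈ ge → M⟦(1 : ℤ)⟧ ∈ ge
  /-- orthogonality: `C_{w≤0} ⊥ C_{w≥0}[1]` -/
  orth : ∀ ⦃M N : C⦄, M ∈ le → N ∈ ge → ∀ f : M ⟶ N⟦(1 : ℤ)⟧, f = 0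
  /-- weight decompositions -/
  decomp : ∀ M : C, ∃ (L R : C) (f : L ⟶ M) (g : M ⟶ R) (h : R ⟶ L⟦(1 : ℤ)⟧),
    Triangle.mk f g h ∈ (distTriang C) ∧ L ∈ le ∧ R⟦(-1 : ℤ)⟧ ∈ ge

/-- Effective `R`-linear Chow motives lie in the heart of the Chow weight structure.
Abstract setting: `C` is the category `DM^{eff}_R` of motivic complexes, `Var` indexes
the smooth `k`-varieties, `M X` is the motive of `X`, `proper X` says that `X` is
smooth projective, and `w` is the Chow weight structure generated by `{M X : X ∈ Var}`.
Given the orthogonality `M Y ⊥ (M X)[i]` for `X` smooth projective and `i > 0`, every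
`M X` with `X` smooth projective lies in the heart `C_{w=0}`; consequently any retract
of such a motive (i.e. any effective `R`-linear Chow motive) lies in the heart. -/
theorem chow_motives_in_heart
    (Var : Type u') (M : Var → C) (proper : Var → Prop)
    (w : WeightStructure C)
    -- `w` is generated by the motives of all smooth varieties:
    (hgen : w.ge = {N : C | ∀ X : Var, ∀ i : ℤ, 0 < i → ∀ f : (M X)⟦-i⟧ ⟶ N, f = 0})
    -- vanishing of positive-degree morphisms into motives of smooth projective varieties:
    (horth : ∀ (Y X : Var), proper X → ∀ i : ℤ, 0 < i → ∀ f : M Y ⟶ (M X)⟦i⟧, f = 0) :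
    (∀ X : Var, proper X → M X ∈ w.le ∩ w.ge) ∧
    (∀ (N : C) (X : Var), proper X →
      (∃ (i : N ⟶ M X) (r : M X ⟶ N), i ≫ r = 𝟙 N) → N ∈ w.le ∩ w.ge) := by
  have key : ∀ X : Var, proper X → M X ∈ w.le ∩ w.ge := by
    intro X hX
    constructor
    · -- M X ∈ w.le
      obtain ⟨L, R, f, g, h, hT, hL, hR⟩ := w.decomp (M X)
      rw [hgen] at hR
      have hg : g = 0 := by
        apply (shiftFunctor C (-1 : ℤ)).map_injective
        rw [Functor.map_zero]
        exact hR X 1 one_pos ((shiftFunctor C (-1 : ℤ)).map g)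
      obtain ⟨s, hs⟩ := Triangle.coyoneda_exact₂ _ hT (𝟙 (M X))
        (by subst hg; exact Category.id_comp _)
      exact w.le_retract hL s f hs.symm
    · -- M X ∈ w.ge
      rw [hgen]
      intro Y i hi f
      apply (shiftFunctor C i).map_injective
      rw [Functor.map_zero]
      have h0 : (shiftFunctorCompIsoId C (-i) i (neg_add_cancel i)).inv.app (M Y) ≫
          (shiftFunctor C i).map f = 0 := horth Y X hX i hi _
      rw [← cancel_epi ((shiftFunctorCompIsoId C (-i) i (neg_add_cancel i)).inv.app (M Y))]
      simpa using h0
  refine ⟨key, ?_⟩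
  intro N X hX ⟨i, r, hir⟩
  obtain ⟨h1, h2⟩ := key X hX
  exact ⟨w.le_retract h1 i r hir, w.ge_retract h2 i r hir⟩
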